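/- Let n ≥ 1 and let μ : Finset (Fin n) → ℝ be a monotone capacity (μ(∅) = 0 and μ(R) ≤ μ(T) whenever R ⊆ T). Let x, y : Fin n → ℝ with 0 ≤ x_i ≤ y_i for all i, let σ be any permutation sorting x nondecreasingly and τ any permutation sorting y nondecreasingly. Then the Choquet sums satisfy S(μ, x, σ) ≤ S(μ, y, τ); i.e., the Choquet integral with respect to a monotone capacity is nondecreasing in each of its arguments. -/

import Mathlib

open MeasureTheory Finset

noncomputable def choquetSum {n : ℕ} (μ : Finset (Fin n) → ℝ) (x : Fin n → ℝ)
    (σ : Equiv.Perm (Fin n)) : ℝ :=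
  ∑ i : Fin n,
    (x (σ i) -
        (if h : (i : ℕ) = 0 then 0
          else x (σ ⟨(i : ℕ) - 1, by have := i.isLt; omega⟩))) *
      μ (Finset.univ.filter (fun j => x (σ i) ≤ x j))

namespace ChoquetAux

variable {n : ℕ}

/-- Level sequence: `0, x(σ 0), …, x(σ (n-1)), B, B, …`. -/
noncomputable def lev (x : Fin n → ℝ) (σ : Equiv.Perm (Fin n)) (B : ℝ) (k : ℕ) : ℝ :=
  if h : k = 0 then 0
  else if h2 : k - 1 < n then x (σ ⟨k - 1, h2⟩) else B

lemma lev_zero (x : Fin n → ℝ) (σ : Equiv.Perm (Fin n)) (B : ℝ) : lev x σ B 0 = 0 := rfl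

lemma lev_succ_lt (x : Fin n → ℝ) (σ : Equiv.Perm (Fin n)) (B : ℝ) {k : ℕ} (h : k < n) :
    lev x σ B (k + 1) = x (σ ⟨k, h⟩) := by
  simp [lev, h]

lemma lev_succ_ge (x : Fin n → ℝ) (σ : Equiv.Perm (Fin n)) (B : ℝ) {k : ℕ} (h : ¬ k < n) :
    lev x σ B (k + 1) = B := by
  simp [lev, h]

lemma lev_val (x : Fin n → ℝ) (σ : Equiv.Perm (Fin n)) (B : ℝ) {k : ℕ}
    (hk0 : k ≠ 0) (hk : k - 1 < n) : lev x σ B k = x (σ ⟨k - 1, hk⟩) := by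
  unfold lev
  rw [dif_neg hk0, dif_pos hk]

lemma lev_step (x : Fin n → ℝ) (σ : Equiv.Perm (Fin n)) (B : ℝ)
    (hx : ∀ j, 0 ≤ x j) (hσ : Monotone fun i => x (σ i)) (hB : ∀ j, x j ≤ B)
    (hn : 1 ≤ n) (k : ℕ) : lev x σ B k ≤ lev x σ B (k + 1) := by
  rcases Nat.eq_zero_or_pos k with hk | hk
  · subst hk
    rw [lev_zero, lev_succ_lt x σ B (by omega : 0 < n)]
    exact hx _
  · obtain ⟨m, rfl⟩ : ∃ m, k = m + 1 := ⟨k - 1, by omega⟩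
    by_cases hm : m < n
    · rw [lev_succ_lt x σ B hm]
      by_cases hm1 : m + 1 < n
      · rw [lev_succ_lt x σ B hm1]
        exact hσ (by simp [Fin.le_def])
      · rw [lev_succ_ge x σ B hm1]; exact hB _
    · rw [lev_succ_ge x σ B hm, lev_succ_ge x σ B (by omega)]

/-- On the piece `(lev k, lev (k+1)]` with `k < n`, the level set of `x` is constant. -/
lemma filter_eq_on_piece (x : Fin n → ℝ) (σ : Equiv.Perm (Fin n))
    (hσ : Monotone fun i => x (σ i)) (B : ℝ) {k : ℕ} (hk : k < n) {t : ℝ}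
    (ht : t ∈ Set.Ioc (lev x σ B k) (lev x σ B (k + 1))) :
    univ.filter (fun j => t ≤ x j) = univ.filter (fun j => x (σ ⟨k, hk⟩) ≤ x j) := by
  obtain ⟨ht1, ht2⟩ := ht
  rw [lev_succ_lt x σ B hk] at ht2
  ext j
  simp only [mem_filter, mem_univ, true_and]
  constructor
  · intro htj
    have hj : x j = x (σ (σ.symm j)) := by rw [Equiv.apply_symm_apply]
    by_contra hlt
    push_neg at hlt
    have hji : (σ.symm j : ℕ) < k := by
      by_contra h
      push_neg at h
      have : x (σ ⟨k, hk⟩) ≤ x (σ (σ.symm j)) := hσ (by simp [Fin.le_def, h])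
      rw [← hj] at this; linarith
    -- then x j ≤ lev k < t, contradiction
    have hk0 : k ≠ 0 := by omega
    have hlev : lev x σ B k = x (σ ⟨k - 1, by omega⟩) := lev_val x σ B hk0 (by omega)
    have : x (σ (σ.symm j)) ≤ x (σ ⟨k - 1, by omega⟩) :=
      hσ (by simp [Fin.le_def]; omega)
    rw [← hj] at this
    rw [hlev] at ht1
    linarith
  · intro h; linarith

/-- Beyond the top level, the level set is empty. -/
lemma filter_empty_of_top (x : Fin n → ℝ) (σ : Equiv.Perm (Fin n))
    (hσ : Monotone fun i => x (σ i)) (B : ℝ) {t : ℝ}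
    (ht : t ∈ Set.Ioc (lev x σ B n) (lev x σ B (n + 1))) (hn : 1 ≤ n) :
    univ.filter (fun j => t ≤ x j) = ∅ := by
  obtain ⟨ht1, _⟩ := ht
  have hlev : lev x σ B n = x (σ ⟨n - 1, by omega⟩) := lev_val x σ B (by omega) (by omega)
  rw [hlev] at ht1
  rw [Finset.filter_eq_empty_iff]
  intro j _
  have hj : x j = x (σ (σ.symm j)) := by rw [Equiv.apply_symm_apply]
  have : x (σ (σ.symm j)) ≤ x (σ ⟨n - 1, by omega⟩) :=
    hσ (by simp [Fin.le_def]; omega)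
  rw [← hj] at this
  push_neg
  linarith

/-- Integrability of the level function over each piece. -/
lemma piece_integrable (μ : Finset (Fin n) → ℝ) (x : Fin n → ℝ)
    (σ : Equiv.Perm (Fin n)) (hx : ∀ j, 0 ≤ x j)
    (hσ : Monotone fun i => x (σ i)) (B : ℝ) (hB : ∀ j, x j ≤ B) (hn : 1 ≤ n) :
    ∀ k < n + 1, IntervalIntegrable (fun t => μ (univ.filter (fun j => t ≤ x j)))
      volume (lev x σ B k) (lev x σ B (k + 1)) := by
  intro k hk
  rw [intervalIntegrable_iff_integrableOn_Ioc_of_le (lev_step x σ B hx hσ hB hn k)]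
  by_cases hkn : k < n
  · rw [integrableOn_congr_fun
      (fun t ht => by rw [filter_eq_on_piece x σ hσ B hkn ht]) measurableSet_Ioc]
    exact integrableOn_const measure_Ioc_lt_top.ne
  · have hkn' : k = n := by omega
    subst hkn'
    rw [integrableOn_congr_fun (g := fun _ => μ ∅)
      (fun t ht => by rw [filter_empty_of_top x σ hσ B ht hn]) measurableSet_Ioc]
    exact integrableOn_const measure_Ioc_lt_top.ne

/-- The layer-cake representation of the Choquet sum. -/
lemma rep (μ : Finset (Fin n) → ℝ) (hμ0 : μ ∅ = 0) (x : Fin n → ℝ)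
    (σ : Equiv.Perm (Fin n)) (hx : ∀ j, 0 ≤ x j)
    (hσ : Monotone fun i => x (σ i)) (B : ℝ) (hB : ∀ j, x j ≤ B) (hn : 1 ≤ n) :
    ∫ t in Set.Ioc (0:ℝ) B, μ (univ.filter (fun j => t ≤ x j)) = choquetSum μ x σ := by
  have hpi := piece_integrable μ x σ hx hσ B hB hn
  have hsum := intervalIntegral.sum_integral_adjacent_intervals hpi
  have h0B : (0:ℝ) ≤ B := le_trans (hx ⟨0, by omega⟩) (hB ⟨0, by omega⟩)
  have hlevtop : lev x σ B (n + 1) = B := lev_succ_ge x σ B (by omega)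
  rw [lev_zero, hlevtop, intervalIntegral.integral_of_le h0B] at hsum
  rw [← hsum, Finset.sum_range_succ]
  -- last piece is zero
  have hlast : ∫ t in lev x σ B n..lev x σ B (n+1),
      μ (univ.filter (fun j => t ≤ x j)) = 0 := by
    rw [intervalIntegral.integral_of_le (lev_step x σ B hx hσ hB hn n),
      setIntegral_congr_fun measurableSet_Ioc
        (fun t ht => by rw [filter_empty_of_top x σ hσ B ht hn] : Set.EqOn _ (fun _ => μ ∅) _),
      setIntegral_const, hμ0, smul_zero]
  rw [hlast, add_zero, choquetSum,
    ← Fin.sum_univ_eq_sum_range (fun k => ∫ t in lev x σ B k..lev x σ B (k + 1),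
      μ (univ.filter (fun j => t ≤ x j))) n]
  apply Finset.sum_congr rfl
  intro i _
  have hk : (i : ℕ) < n := i.isLt
  have hstep := lev_step x σ B hx hσ hB hn (i : ℕ)
  have heta : (⟨(i : ℕ), hk⟩ : Fin n) = i := rfl
  rw [intervalIntegral.integral_of_le hstep,
    setIntegral_congr_fun measurableSet_Ioc
      (fun t ht => by rw [filter_eq_on_piece x σ hσ B hk ht] :
        Set.EqOn _ (fun _ => μ (univ.filter (fun j => x (σ ⟨(i : ℕ), hk⟩) ≤ x j))) _),
    setIntegral_const, Real.volume_real_Ioc_of_le hstep, smul_eq_mul,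
    heta]
  congr 2
  · exact lev_succ_lt x σ B hk
  · by_cases hk0 : (i : ℕ) = 0
    · rw [dif_pos hk0]
      unfold lev
      rw [dif_pos hk0]
    · rw [dif_neg hk0, lev_val x σ B hk0 (by omega)]

end ChoquetAux

theorem choquetSum_monotone {n : ℕ} (hn : 1 ≤ n)
    (μ : Finset (Fin n) → ℝ) (hμ0 : μ ∅ = 0)
    (hμmono : ∀ R T : Finset (Fin n), R ⊆ T → μ R ≤ μ T)
    (x y : Fin n → ℝ) (hx : ∀ i, 0 ≤ x i) (hxy : ∀ i, x i ≤ y i)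
    (σ τ : Equiv.Perm (Fin n))
    (hσ : Monotone fun i => x (σ i)) (hτ : Monotone fun i => y (τ i)) :
    choquetSum μ x σ ≤ choquetSum μ y τ := by
  set B := ∑ j : Fin n, y j with hBdef
  have hy : ∀ j, 0 ≤ y j := fun j => le_trans (hx j) (hxy j)
  have hyB : ∀ j, y j ≤ B :=
    fun j => Finset.single_le_sum (fun i _ => hy i) (Finset.mem_univ j)
  have hxB : ∀ j, x j ≤ B := fun j => le_trans (hxy j) (hyB j)
  rw [← ChoquetAux.rep μ hμ0 x σ hx hσ B hxB hn,
      ← ChoquetAux.rep μ hμ0 y τ hy hτ B hyB hn]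
  have h0B : (0:ℝ) ≤ B := le_trans (hy ⟨0, by omega⟩) (hyB ⟨0, by omega⟩)
  have hix : IntegrableOn (fun t => μ (Finset.univ.filter (fun j => t ≤ x j)))
      (Set.Ioc 0 B) volume := by
    rw [← intervalIntegrable_iff_integrableOn_Ioc_of_le h0B]
    have := IntervalIntegrable.trans_iterate
      (ChoquetAux.piece_integrable μ x σ hx hσ B hxB hn)
    rwa [ChoquetAux.lev_zero, ChoquetAux.lev_succ_ge x σ B (by omega)] at this
  have hiy : IntegrableOn (fun t => μ (Finset.univ.filter (fun j => t ≤ y j)))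
      (Set.Ioc 0 B) volume := by
    rw [← intervalIntegrable_iff_integrableOn_Ioc_of_le h0B]
    have := IntervalIntegrable.trans_iterate
      (ChoquetAux.piece_integrable μ y τ hy hτ B hyB hn)
    rwa [ChoquetAux.lev_zero, ChoquetAux.lev_succ_ge y τ B (by omega)] at this
  apply setIntegral_mono_on hix hiy measurableSet_Ioc
  intro t _
  apply hμmono
  intro j hj
  rw [Finset.mem_filter] at hj ⊢
  exact ⟨hj.1, le_trans hj.2 (hxy j)⟩
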